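/- For the symmetric beta density, the following pointwise monotonicity in a holds at the mode: g(0; a, m) = (2a−1)!-type expression m^(2a−2)/((2m)^(2a−1) B(a,a)) = Γ(2a)/(2m Γ(a)² 2^(2a−2)) is strictly increasing in a for a ≥ 1. -/

import Mathlib

open MeasureTheory Real

/-- Beta function `B(a,a)`. -/
noncomputable def betaFn (a : ℝ) : ℝ := ∫ t in (0:ℝ)..1, t ^ (a - 1) * (1 - t) ^ (a - 1)

/-- Symmetric beta density on `[-m, m]`. -/
noncomputable def g (a m x : ℝ) : ℝ :=
  if x ∈ Set.Icc (-m) m then (m ^ 2 - x ^ 2) ^ (a - 1) / ((2 * m) ^ (2 * a - 1) * betaFn a) else 0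

lemma betaFn_eq_gamma {a : ℝ} (ha : 0 < a) :
    betaFn a = Real.Gamma a ^ 2 / Real.Gamma (2 * a) := by
  have ha' : 0 < (a : ℂ).re := by simpa using ha
  have h := Complex.Gamma_mul_Gamma_eq_betaIntegral ha' ha'
  have hB : Complex.betaIntegral a a = (betaFn a : ℂ) := by
    rw [Complex.betaIntegral, betaFn, ← intervalIntegral.integral_ofReal]
    refine intervalIntegral.integral_congr fun x hx => ?_
    rw [Set.uIcc_of_le (by norm_num : (0:ℝ) ≤ 1)] at hx
    rw [Complex.ofReal_mul, Complex.ofReal_cpow hx.1 (a-1),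
      Complex.ofReal_cpow (by linarith [hx.2] : (0:ℝ) ≤ 1 - x) (a-1)]
    push_cast
    ring
  rw [hB] at h
  have h2 : ((a : ℂ) + a) = ((2 * a : ℝ) : ℂ) := by push_cast; ring
  rw [h2, Complex.Gamma_ofReal, Complex.Gamma_ofReal] at h
  have hre : Real.Gamma a * Real.Gamma a = Real.Gamma (2 * a) * betaFn a := by
    exact_mod_cast h
  have hG2 : Real.Gamma (2 * a) ≠ 0 := (Real.Gamma_pos_of_pos (by linarith)).ne'
  field_simp
  rw [sq]; linarith [hre]

lemma betaFn_pos {a : ℝ} (ha : 0 < a) : 0 < betaFn a := by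
  rw [betaFn_eq_gamma ha]
  have := Real.Gamma_pos_of_pos ha
  have := Real.Gamma_pos_of_pos (by linarith : (0:ℝ) < 2 * a)
  positivity

lemma g_zero_eq {a m : ℝ} (hm : 0 < m) (ha : 0 < a) :
    g a m 0 = Real.Gamma (2 * a) / (2 ^ (2 * a - 1) * m * Real.Gamma a ^ 2) := by
  have h0 : (0:ℝ) ∈ Set.Icc (-m) m := ⟨by linarith, hm.le⟩
  rw [g, if_pos h0, betaFn_eq_gamma ha]
  have hm2 : m ^ 2 - (0:ℝ) ^ 2 = m ^ 2 := by ring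
  rw [hm2]
  have e1 : (m ^ 2 : ℝ) ^ (a - 1) = m ^ (2 * (a - 1)) := by
    rw [← Real.rpow_natCast m 2, ← Real.rpow_mul hm.le]; norm_num
  have e2 : (2 * m : ℝ) ^ (2 * a - 1) = 2 ^ (2 * a - 1) * m ^ (2 * a - 1) := by
    rw [Real.mul_rpow (by norm_num) hm.le]
  have e3 : m ^ (2 * (a - 1)) = m ^ (2 * a - 1) / m := by
    rw [eq_div_iff hm.ne', ← Real.rpow_add_one hm.ne']
    congr 1
    ring
  rw [e1, e2, e3]
  have hP : (0:ℝ) < m ^ (2 * a - 1) := Real.rpow_pos_of_pos hm _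
  have hQ : (0:ℝ) < (2:ℝ) ^ (2 * a - 1) := Real.rpow_pos_of_pos (by norm_num) _
  have hG1 : (0:ℝ) < Real.Gamma a := Real.Gamma_pos_of_pos ha
  have hG2 : (0:ℝ) < Real.Gamma (2 * a) := Real.Gamma_pos_of_pos (by linarith)
  field_simp

lemma cont_aux {c : ℝ} (hc : 0 ≤ c) : Continuous (fun t : ℝ => 2 * (4 * t * (1 - t)) ^ c) :=
  continuous_const.mul ((Real.continuous_rpow_const hc).comp (by continuity))

lemma scaled_betaFn {c : ℝ} (hc : 1 ≤ c) :
    2 ^ (2 * c - 1) * betaFn c = ∫ t in (0:ℝ)..1, 2 * (4 * t * (1 - t)) ^ (c - 1) := by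
  rw [betaFn, ← intervalIntegral.integral_const_mul]
  refine intervalIntegral.integral_congr fun t ht => ?_
  rw [Set.uIcc_of_le (by norm_num : (0:ℝ) ≤ 1)] at ht
  have ht0 : 0 ≤ t := ht.1
  have ht1 : 0 ≤ 1 - t := by linarith [ht.2]
  rw [mul_comm (4 * t) (1 - t)]
  rw [Real.mul_rpow (by linarith) (by positivity), Real.mul_rpow (by norm_num) ht0]
  have e4 : (4:ℝ) ^ (c - 1) = 2 ^ (2 * (c - 1)) := by
    rw [Real.rpow_mul (by norm_num : (0:ℝ) ≤ 2)]
    norm_num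
  have e5 : (2:ℝ) ^ (2 * c - 1) = 2 * 2 ^ (2 * (c - 1)) := by
    have h : 2 * c - 1 = 1 + 2 * (c - 1) := by ring
    rw [h, Real.rpow_add (by norm_num : (0:ℝ) < 2), Real.rpow_one]
  rw [e4, e5]
  ring

theorem symmetricBeta_mode_value_strictMono (m : ℝ) (hm : 0 < m) :
    StrictMonoOn (fun a : ℝ => g a m 0) (Set.Ici 1) ∧
    ∀ a : ℝ, 1 ≤ a →
      g a m 0 = Real.Gamma (2 * a) / (2 ^ (2 * a - 1) * m * Real.Gamma a ^ 2) := by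
  constructor
  · intro a ha b hb hab
    simp only [Set.mem_Ici] at ha hb
    have ha0 : (0:ℝ) < a := by linarith
    have hb0 : (0:ℝ) < b := by linarith
    -- express g · m 0 as 1 / (m * H ·)
    have key : ∀ c : ℝ, 1 ≤ c → g c m 0 = 1 / (m * (2 ^ (2 * c - 1) * betaFn c)) := by
      intro c hc
      rw [g_zero_eq hm (by linarith), betaFn_eq_gamma (by linarith)]
      have hQ : (0:ℝ) < (2:ℝ) ^ (2 * c - 1) := Real.rpow_pos_of_pos (by norm_num) _
      have hG1 : (0:ℝ) < Real.Gamma c := Real.Gamma_pos_of_pos (by linarith)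
      have hG2 : (0:ℝ) < Real.Gamma (2 * c) := Real.Gamma_pos_of_pos (by linarith)
      field_simp
    have Hpos : ∀ c : ℝ, 1 ≤ c → 0 < 2 ^ (2 * c - 1) * betaFn c := fun c hc =>
      mul_pos (Real.rpow_pos_of_pos (by norm_num) _) (betaFn_pos (by linarith))
    have hHlt : 2 ^ (2 * b - 1) * betaFn b < 2 ^ (2 * a - 1) * betaFn a := by
      rw [scaled_betaFn ha, scaled_betaFn hb]
      refine intervalIntegral.integral_lt_integral_of_continuousOn_of_le_of_exists_lt
        (by norm_num) ((cont_aux (by linarith : (0:ℝ) ≤ b - 1)).continuousOn)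
        ((cont_aux (by linarith : (0:ℝ) ≤ a - 1)).continuousOn) ?_ ?_
      · intro t ht
        have ht0 : 0 < t := ht.1
        have ht1 : t ≤ 1 := ht.2
        have hu0 : 0 ≤ 4 * t * (1 - t) := by nlinarith
        have hu1 : 4 * t * (1 - t) ≤ 1 := by nlinarith [sq_nonneg (2 * t - 1)]
        rcases eq_or_lt_of_le hu0 with h | h
        · rw [← h, Real.zero_rpow (by intro hh; linarith [hh] : b - 1 ≠ 0)]
          have h2 : (0:ℝ) ≤ (0:ℝ) ^ (a - 1) := Real.rpow_nonneg le_rfl _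
          linarith
        · exact mul_le_mul_of_nonneg_left
            (Real.rpow_le_rpow_of_exponent_ge h hu1 (by linarith)) (by norm_num)
      · refine ⟨1/4, by norm_num, ?_⟩
        have : (4 * (1/4 : ℝ) * (1 - 1/4)) = 3/4 := by norm_num
        rw [this]
        have := Real.rpow_lt_rpow_of_exponent_gt (x := (3/4:ℝ)) (by norm_num) (by norm_num)
          (by linarith : a - 1 < b - 1)
        linarith
    show g a m 0 < g b m 0
    rw [key a ha, key b hb]
    apply one_div_lt_one_div_of_lt (mul_pos hm (Hpos b hb))
    exact mul_lt_mul_of_pos_left hHlt hm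
  · intro a ha
    exact g_zero_eq hm (by linarith)
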